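/- arXiv:1312.5431 — 2 statements merged into one kernel-verified Lean document; each statement's English description precedes it below -/
import Mathlib

section
/- Let Γ be a group. Then the two natural positive cones of the hermitian part of the augmentation ideal coincide: I[Γ] ∩ Σ²ℝ[Γ] = Σ²I[Γ]. In particular, if ξ ∈ ℝ[Γ] is a finite sum of hermitian squares ξ = Σᵢ ηᵢ*ηᵢ with ηᵢ ∈ ℝ[Γ], and Σ_x ξ(x) = 0, then ξ can be written as a finite sum ξ = Σⱼ ζⱼ*ζⱼ with every ζⱼ ∈ I[Γ]. -/
open MonoidAlgebra Finset RealInnerProductSpace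

/-- The involution `ξ*(x) = ξ(x⁻¹)` on the real group algebra `ℝ[Γ]`. -/
def astar {Γ : Type*} [Group Γ] (ξ : MonoidAlgebra ℝ Γ) : MonoidAlgebra ℝ Γ :=
  MonoidAlgebra.ofCoeff (Finsupp.equivMapDomain (Equiv.inv Γ) ξ.coeff)

/-- The augmentation character `ℝ[Γ] → ℝ`, `ξ ↦ Σ_x ξ(x)`. -/
noncomputable def aug (Γ : Type*) [Group Γ] : MonoidAlgebra ℝ Γ →ₐ[ℝ] ℝ :=
  MonoidAlgebra.lift ℝ ℝ Γ 1

/-- The augmentation ideal `I[Γ] = {ξ ∈ ℝ[Γ] : Σ_x ξ(x) = 0}`, as an `ℝ`-submodule. -/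
noncomputable def augIdeal (Γ : Type*) [Group Γ] : Submodule ℝ (MonoidAlgebra ℝ Γ) :=
  LinearMap.ker (aug Γ).toLinearMap

/-- `Σ²ℝ[Γ]`, the set of finite sums of hermitian squares in `ℝ[Γ]`. -/
def SOS (Γ : Type*) [Group Γ] : Set (MonoidAlgebra ℝ Γ) :=
  {ξ | ∃ (n : ℕ) (f : Fin n → MonoidAlgebra ℝ Γ), ξ = ∑ i, astar (f i) * f i}

/-- `Σ²I[Γ]`, the set of finite sums of hermitian squares of elements of `I[Γ]`. -/
def SOSI (Γ : Type*) [Group Γ] : Set (MonoidAlgebra ℝ Γ) :=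
  {ξ | ∃ (n : ℕ) (f : Fin n → MonoidAlgebra ℝ Γ),
    (∀ i, f i ∈ augIdeal Γ) ∧ ξ = ∑ i, astar (f i) * f i}


private lemma aug_astar {Γ : Type*} [Group Γ] (η : MonoidAlgebra ℝ Γ) :
    aug Γ (astar η) = aug Γ η := by
  simp [aug, astar, MonoidAlgebra.lift_apply, Finsupp.sum_equivMapDomain]

private lemma key {Γ : Type*} [Group Γ] (ξ : MonoidAlgebra ℝ Γ) (h1 : ξ ∈ SOS Γ)
    (h2 : ξ ∈ augIdeal Γ) : ξ ∈ SOSI Γ := by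
  obtain ⟨n, f, rfl⟩ := h1
  refine ⟨n, f, fun i => ?_, rfl⟩
  have h0 : ∑ i, (aug Γ (f i))^2 = 0 := by
    have := h2
    simp only [augIdeal, LinearMap.mem_ker, AlgHom.toLinearMap_apply, map_sum, map_mul] at this
    simpa [aug_astar, sq] using this
  have := (Finset.sum_eq_zero_iff_of_nonneg (fun i _ => sq_nonneg (aug Γ (f i)))).mp h0
    i (Finset.mem_univ i)
  simp only [augIdeal, LinearMap.mem_ker, AlgHom.toLinearMap_apply]
  exact pow_eq_zero_iff (n := 2) (by norm_num) |>.mp this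

/-- `I[Γ] ∩ Σ²ℝ[Γ] = Σ²I[Γ]`. -/
theorem stmt8 {Γ : Type*} [Group Γ] :
    ((augIdeal Γ : Set (MonoidAlgebra ℝ Γ)) ∩ SOS Γ = SOSI Γ) ∧
    (∀ ξ : MonoidAlgebra ℝ Γ, ξ ∈ SOS Γ → ξ ∈ augIdeal Γ →
      ∃ (m : ℕ) (ζ : Fin m → MonoidAlgebra ℝ Γ),
        (∀ j, ζ j ∈ augIdeal Γ) ∧ ξ = ∑ j, astar (ζ j) * ζ j) := by
  constructor
  · ext ξ
    constructor
    · rintro ⟨h2, h1⟩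
      exact key ξ h1 h2
    · rintro ⟨n, f, hf, rfl⟩
      constructor
      · simp only [augIdeal, SetLike.mem_coe, LinearMap.mem_ker, AlgHom.toLinearMap_apply,
          map_sum, map_mul]
        refine Finset.sum_eq_zero fun i _ => ?_
        have : aug Γ (f i) = 0 := hf i
        simp [this]
      · exact ⟨n, f, rfl⟩
  · intro ξ h1 h2
    exact key ξ h1 h2
end

section
/- Let Γ be a group and x, y ∈ Γ. Then in the real group algebra ℝ[Γ] the element 2(1−x)*(1−x) + 2(1−y)*(1−y) − (1−xy)*(1−xy) belongs to Σ²I[Γ]; indeed, it equals η*η where η = (1−x) − x(1−y) ∈ I[Γ]. -/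
open MonoidAlgebra Finset RealInnerProductSpace

lemma astar_sub {Γ : Type*} [Group Γ] (a b : MonoidAlgebra ℝ Γ) :
    astar (a - b) = astar a - astar b :=
  congrArg MonoidAlgebra.ofCoeff (map_sub (Finsupp.domLCongr (R := ℝ) (M := ℝ) (Equiv.inv Γ)) a.coeff b.coeff)

lemma astar_single {Γ : Type*} [Group Γ] (g : Γ) (r : ℝ) :
    astar (MonoidAlgebra.single g r) = MonoidAlgebra.single g⁻¹ r := by
  rw [astar, coeff_single, Finsupp.equivMapDomain_single]; rfl

lemma astar_one {Γ : Type*} [Group Γ] : astar (1 : MonoidAlgebra ℝ Γ) = 1 := by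
  rw [MonoidAlgebra.one_def, astar_single]; simp [MonoidAlgebra.one_def]

lemma astar_of {Γ : Type*} [Group Γ] (g : Γ) : astar (of ℝ Γ g) = of ℝ Γ g⁻¹ := by
  rw [MonoidAlgebra.of_apply, astar_single, MonoidAlgebra.of_apply]

lemma key_s9 {A : Type*} [Ring A] (a a' b b' : A) (ha : a' * a = 1) (hb : b' * b = 1) :
    ((1 - a') * (1 - a) + (1 - a') * (1 - a)) + ((1 - b') * (1 - b) + (1 - b') * (1 - b))
      - (1 - b' * a') * (1 - a * b)
    = ((1 - a') - (a' - b' * a')) * ((1 - a) - a * (1 - b)) := by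
  have h1 : a' * (a * b) = b := by rw [← mul_assoc, ha, one_mul]
  noncomm_ring
  rw [ha, hb, h1, hb]
  noncomm_ring

/-- the parallelogram-type identity
`2(1-x)*(1-x) + 2(1-y)*(1-y) - (1-xy)*(1-xy) = η*η` with `η = (1-x) - x(1-y) ∈ I[Γ]`. -/
theorem stmt9 {Γ : Type*} [Group Γ] (x y : Γ) :
    ((2 : ℝ) • (astar (1 - of ℝ Γ x) * (1 - of ℝ Γ x))
        + (2 : ℝ) • (astar (1 - of ℝ Γ y) * (1 - of ℝ Γ y))
        - astar (1 - of ℝ Γ (x * y)) * (1 - of ℝ Γ (x * y))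
      = astar ((1 - of ℝ Γ x) - of ℝ Γ x * (1 - of ℝ Γ y))
          * ((1 - of ℝ Γ x) - of ℝ Γ x * (1 - of ℝ Γ y))) ∧
    ((1 - of ℝ Γ x) - of ℝ Γ x * (1 - of ℝ Γ y) ∈ augIdeal Γ) ∧
    ((2 : ℝ) • (astar (1 - of ℝ Γ x) * (1 - of ℝ Γ x))
        + (2 : ℝ) • (astar (1 - of ℝ Γ y) * (1 - of ℝ Γ y))
        - astar (1 - of ℝ Γ (x * y)) * (1 - of ℝ Γ (x * y)) ∈ SOSI Γ) := by
  set a := of ℝ Γ x with ha_def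
  set b := of ℝ Γ y with hb_def
  set a' := of ℝ Γ x⁻¹ with ha'_def
  set b' := of ℝ Γ y⁻¹ with hb'_def
  have hab : of ℝ Γ (x * y) = a * b := map_mul (of ℝ Γ) x y
  have ha : a' * a = 1 := by rw [ha_def, ha'_def, ← map_mul, inv_mul_cancel, map_one]
  have hb : b' * b = 1 := by rw [hb_def, hb'_def, ← map_mul, inv_mul_cancel, map_one]
  have e1 : astar (1 - a) = 1 - a' := by rw [astar_sub, astar_one, ha_def, astar_of]
  have e2 : astar (1 - b) = 1 - b' := by rw [astar_sub, astar_one, hb_def, astar_of]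
  have e3 : astar (1 - of ℝ Γ (x * y)) = 1 - b' * a' := by
    rw [astar_sub, astar_one, astar_of, mul_inv_rev, map_mul]
  have e4 : astar ((1 - a) - a * (1 - b)) = (1 - a') - (a' - b' * a') := by
    rw [mul_sub, mul_one, ← hab, astar_sub, astar_sub, astar_one, ha_def, astar_of,
      astar_sub, astar_of, astar_of, mul_inv_rev, map_mul]
  have heq : (2 : ℝ) • (astar (1 - a) * (1 - a)) + (2 : ℝ) • (astar (1 - b) * (1 - b))
      - astar (1 - of ℝ Γ (x * y)) * (1 - of ℝ Γ (x * y))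
      = astar ((1 - a) - a * (1 - b)) * ((1 - a) - a * (1 - b)) := by
    rw [e1, e2, e3, e4, hab, two_smul, two_smul]
    exact key_s9 a a' b b' ha hb
  have hmem : (1 - a) - a * (1 - b) ∈ augIdeal Γ := by
    simp only [augIdeal, LinearMap.mem_ker, AlgHom.toLinearMap_apply]
    rw [map_sub, map_sub, map_mul, map_sub, map_one, ha_def, hb_def]
    simp [aug]
  refine ⟨heq, hmem, 1, ![(1 - a) - a * (1 - b)], ?_, ?_⟩
  · intro i; fin_cases i; simpa using hmem
  · rw [heq]; simp
end
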